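/- Let G be a finite directed graph, σ a coloring with colors C, and for colors c₁,c₂ let τ_max(c₁,c₂)/τ_min(c₁,c₂) ≤ ε for all pairs with E_{c₁c₂} ≠ ∅ (where τ_min > 0 on such pairs). Then for any acyclic query graph Q with n vertices, the lifted estimate Φ(Q,𝒢) computed with τ_avg satisfies max(Φ(Q,𝒢)/|hom(Q,G)|, |hom(Q,G)|/Φ(Q,𝒢)) ≤ ε^(n−1), assuming |hom(Q,G)| > 0. -/

import Mathlib

open Finset

section Aux
variable {V C : Type*} [Fintype V] [DecidableEq V] [Fintype C] [DecidableEq C]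

def myDeg (E : Finset (V × V)) (σ : V → C) (b : Bool) (v : V) (c : C) : ℕ :=
  if b then (Finset.univ.filter (fun u => (v, u) ∈ E ∧ σ u = c)).card
  else (Finset.univ.filter (fun u => (u, v) ∈ E ∧ σ u = c)).card

def tcSet (E : Finset (V × V)) (σ : V → C) (n : ℕ) (parent : Fin (n+1) → Fin (n+1))
    (dir : Fin (n+1) → Bool) (g : Fin (n+1) → C) : Finset (Fin (n+1) → V) :=
  Finset.univ.filter (fun f =>
    (∀ j : Fin (n+1), j ≠ 0 →
      (if dir j then (f (parent j), f j) ∈ E else (f j, f (parent j)) ∈ E))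
    ∧ ∀ j, σ (f j) = g j)

def tmin (E : Finset (V × V)) (σ : V → C) (n : ℕ) (parent : Fin (n+1) → Fin (n+1))
    (dir : Fin (n+1) → Bool) (g : Fin (n+1) → C) (j : Fin (n+1)) : ℕ :=
  if h : (Finset.univ.filter (fun v => σ v = g (parent j))).Nonempty
  then (Finset.univ.filter (fun v => σ v = g (parent j))).inf' h
    (fun v => myDeg E σ (dir j) v (g j)) else 0

def tmax (E : Finset (V × V)) (σ : V → C) (n : ℕ) (parent : Fin (n+1) → Fin (n+1))
    (dir : Fin (n+1) → Bool) (g : Fin (n+1) → C) (j : Fin (n+1)) : ℕ :=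
  if h : (Finset.univ.filter (fun v => σ v = g (parent j))).Nonempty
  then (Finset.univ.filter (fun v => σ v = g (parent j))).sup' h
    (fun v => myDeg E σ (dir j) v (g j)) else 0

lemma prod_split {M : Type*} [CommMonoid M] (n : ℕ) (F : Fin (n+2) → M) :
    ∏ j ∈ Finset.univ.filter (fun j : Fin (n+2) => j ≠ 0), F j
      = (∏ i ∈ Finset.univ.filter (fun i : Fin (n+1) => i ≠ 0), F i.castSucc)
        * F (Fin.last (n+1)) := by
  rw [prod_filter, prod_filter, Fin.prod_univ_castSucc]
  have h1 : ∀ i : Fin (n+1), (i.castSucc ≠ (0 : Fin (n+2))) ↔ i ≠ 0 := by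
    intro i; rw [Ne, Ne, Fin.ext_iff, Fin.ext_iff, Fin.coe_castSucc, Fin.val_zero, Fin.val_zero]
  have h2 : (Fin.last (n+1)) ≠ (0 : Fin (n+2)) := by simp [Fin.ext_iff]
  rw [if_pos h2]
  congr 1
  apply prod_congr rfl
  intro i _
  simp only [h1]


lemma tree_count (E : Finset (V × V)) (σ : V → C) (n : ℕ) :
    ∀ (parent : Fin (n+1) → Fin (n+1)) (dir : Fin (n+1) → Bool),
    (∀ j : Fin (n+1), j ≠ 0 → parent j < j) → ∀ g : Fin (n+1) → C,
    (Finset.univ.filter (fun v => σ v = g 0)).card *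
        ∏ j ∈ Finset.univ.filter (fun j : Fin (n+1) => j ≠ 0), tmin E σ n parent dir g j
      ≤ (tcSet E σ n parent dir g).card
    ∧ (tcSet E σ n parent dir g).card
      ≤ (Finset.univ.filter (fun v => σ v = g 0)).card *
        ∏ j ∈ Finset.univ.filter (fun j : Fin (n+1) => j ≠ 0), tmax E σ n parent dir g j := by
  induction n with
  | zero =>
    intro parent dir hpar g
    have hall : ∀ j : Fin 1, j = 0 := fun j => Subsingleton.elim j 0
    have hempty : Finset.univ.filter (fun j : Fin 1 => j ≠ 0) = ∅ := by
      apply Finset.filter_false_of_mem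
      intro j _
      simp [hall j]
    have hcard : (tcSet E σ 0 parent dir g).card
        = (Finset.univ.filter (fun v => σ v = g 0)).card := by
      apply Finset.card_nbij' (fun f => f 0) (fun v _ => v)
      · intro f hf
        simp only [Finset.mem_coe, tcSet, Finset.mem_filter, Finset.mem_univ, true_and] at hf ⊢
        exact hf.2 0
      · intro v hv
        simp only [Finset.mem_coe, Finset.mem_filter, Finset.mem_univ, true_and] at hv
        simp only [Finset.mem_coe, tcSet, Finset.mem_filter, Finset.mem_univ, true_and]
        constructor
        · intro j hj; exact absurd (hall j) hj
        · intro j; rw [hall j]; exact hv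
      · intro f _
        funext j; rw [hall j]
      · intro v _; rfl
    rw [hempty]
    simp [hcard]
  | succ n ih =>
    intro parent dir hpar g
    set lst : Fin (n+2) := Fin.last (n+1) with hlstdef
    have hlst0 : lst ≠ 0 := by simp [hlstdef, Fin.ext_iff]
    have hplt : parent lst < lst := hpar lst hlst0
    have hpltn : (parent lst : ℕ) < n + 1 := hplt
    set p' : Fin (n+1) := ⟨(parent lst : ℕ), hpltn⟩ with hp'def
    have hp'cast : p'.castSucc = parent lst := by
      simp [Fin.ext_iff, hp'def]
    set parent' : Fin (n+1) → Fin (n+1) := fun j =>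
      if h : ((parent j.castSucc : ℕ) < n+1) then ⟨(parent j.castSucc : ℕ), h⟩ else 0
      with hparent'def
    set dir' : Fin (n+1) → Bool := fun j => dir j.castSucc with hdir'def
    set g' : Fin (n+1) → C := fun j => g j.castSucc with hg'def
    have hcsne : ∀ i : Fin (n+1), i ≠ 0 → (i.castSucc : Fin (n+2)) ≠ 0 := by
      intro i hi
      simp only [ne_eq, Fin.ext_iff] at hi ⊢
      simpa using hi
    have hcast : ∀ j : Fin (n+1), j ≠ 0 → (parent' j).castSucc = parent j.castSucc := by
      intro j hj
      have h1 : (parent j.castSucc : ℕ) < (j.castSucc : ℕ) := hpar _ (hcsne j hj)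
      have h2 : (parent j.castSucc : ℕ) < n+1 := by
        have : (j.castSucc : ℕ) ≤ n := by
          have := j.isLt; simp; omega
        omega
      simp only [hparent'def, dif_pos h2]
      simp [Fin.ext_iff]
    have hpar' : ∀ j : Fin (n+1), j ≠ 0 → parent' j < j := by
      intro j hj
      have h1 : (parent j.castSucc : ℕ) < (j.castSucc : ℕ) := hpar _ (hcsne j hj)
      have h2 := hcast j hj
      have : ((parent' j).castSucc : ℕ) = (parent j.castSucc : ℕ) := by rw [h2]
      simp only [Fin.lt_iff_val_lt_val]
      simp only [Fin.coe_castSucc] at this h1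
      omega
    have hIH := ih parent' dir' hpar' g'
    have hmaps : ∀ f ∈ tcSet E σ (n+1) parent dir g,
        (fun i : Fin (n+1) => f i.castSucc) ∈ tcSet E σ n parent' dir' g' := by
      intro f hf
      simp only [tcSet, Finset.mem_filter, Finset.mem_univ, true_and] at hf ⊢
      obtain ⟨he, hc⟩ := hf
      refine ⟨?_, fun j => hc j.castSucc⟩
      intro j hj
      have h1 := he j.castSucc (hcsne j hj)
      rw [← hcast j hj] at h1
      have h2 : dir' j = dir j.castSucc := rfl
      rw [h2]
      exact h1
    have hsum : (tcSet E σ (n+1) parent dir g).card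
        = ∑ f' ∈ tcSet E σ n parent' dir' g',
            myDeg E σ (dir lst) (f' p') (g lst) := by
      rw [Finset.card_eq_sum_card_fiberwise hmaps]
      apply Finset.sum_congr rfl
      intro f' hf'
      have hkey : (Finset.filter (fun f => (fun i : Fin (n+1) => f i.castSucc) = f')
          (tcSet E σ (n+1) parent dir g)).card
          = (Finset.univ.filter (fun u =>
              (if dir lst then (f' p', u) ∈ E else (u, f' p') ∈ E) ∧ σ u = g lst)).card := by
        apply Finset.card_nbij' (fun f => f lst) (fun v => Fin.snoc f' v)
        · intro f hf
          simp only [Finset.mem_coe, Finset.mem_filter, tcSet, Finset.mem_univ, true_and] at hf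
          obtain ⟨⟨he, hc⟩, heq⟩ := hf
          have h1 := he lst hlst0
          have h2 : f (parent lst) = f' p' := by
            rw [← hp'cast, ← heq]
          rw [h2] at h1
          simp only [Finset.mem_coe, Finset.mem_filter, Finset.mem_univ, true_and]
          exact ⟨h1, hc lst⟩
        · intro v hv
          simp only [Finset.mem_coe, Finset.mem_filter, Finset.mem_univ, true_and] at hv
          obtain ⟨hve, hvc⟩ := hv
          simp only [Finset.mem_coe, tcSet, Finset.mem_filter, Finset.mem_univ, true_and] at hf' ⊢
          obtain ⟨he', hc'⟩ := hf'
          refine ⟨⟨?_, ?_⟩, ?_⟩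
          · intro j hj
            refine Fin.lastCases ?_ ?_ j hj
            · intro _
              have hp2 : p'.castSucc = parent (Fin.last (n+1)) := hp'cast
              simp only [← hp2, Fin.snoc_castSucc, Fin.snoc_last]
              exact hve
            · intro i hi
              have hi0 : i ≠ 0 := by
                intro h
                rw [h] at hi
                exact hi rfl
              rw [← hcast i hi0]
              simp only [Fin.snoc_castSucc]
              exact he' i hi0
          · intro j
            refine Fin.lastCases ?_ ?_ j
            · rw [← hlstdef, Fin.snoc_last]; exact hvc
            · intro i
              rw [Fin.snoc_castSucc]
              exact hc' i
          · funext i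
            exact Fin.snoc_castSucc _ _ i
        · intro f hf
          simp only [Finset.mem_coe, Finset.mem_filter] at hf
          rw [← hf.2]
          exact Fin.snoc_init_self f
        · intro v _
          exact Fin.snoc_last _ _
      rw [hkey]
      rcases h : dir lst
      · simp only [myDeg, h, if_false, Bool.false_eq_true]
      · simp only [myDeg, h, if_true]
    have hmemVc : ∀ f' ∈ tcSet E σ n parent' dir' g',
        f' p' ∈ Finset.univ.filter (fun v => σ v = g (parent lst)) := by
      intro f' hf'
      simp only [tcSet, Finset.mem_filter, Finset.mem_univ, true_and] at hf'
      simp only [Finset.mem_filter, Finset.mem_univ, true_and]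
      have h1 := hf'.2 p'
      have h2 : g' p' = g (parent lst) := by rw [hg'def]; simp only; rw [hp'cast]
      rw [← h2]; exact h1
    have hdegbound : ∀ f' ∈ tcSet E σ n parent' dir' g',
        tmin E σ (n+1) parent dir g lst ≤ myDeg E σ (dir lst) (f' p') (g lst)
        ∧ myDeg E σ (dir lst) (f' p') (g lst) ≤ tmax E σ (n+1) parent dir g lst := by
      intro f' hf'
      have hne : (Finset.univ.filter (fun v => σ v = g (parent lst))).Nonempty :=
        ⟨f' p', hmemVc f' hf'⟩
      constructor
      · rw [tmin, dif_pos hne]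
        exact Finset.inf'_le _ (hmemVc f' hf')
      · rw [tmax, dif_pos hne]
        exact Finset.le_sup' (fun v => myDeg E σ (dir lst) v (g lst)) (hmemVc f' hf')
    have hprodmin : ∏ j ∈ Finset.univ.filter (fun j : Fin (n+2) => j ≠ 0),
          tmin E σ (n+1) parent dir g j
        = (∏ i ∈ Finset.univ.filter (fun i : Fin (n+1) => i ≠ 0),
            tmin E σ n parent' dir' g' i) * tmin E σ (n+1) parent dir g lst := by
      rw [prod_split]
      congr 1
      apply prod_congr rfl
      intro i hi
      have hi0 : i ≠ 0 := by simpa using hi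
      have e1 : g (parent i.castSucc) = g' (parent' i) := by
        rw [hg'def]; simp only; rw [hcast i hi0]
      have e2 : dir i.castSucc = dir' i := rfl
      have e3 : g i.castSucc = g' i := rfl
      rw [tmin, tmin, e1]
    have hprodmax : ∏ j ∈ Finset.univ.filter (fun j : Fin (n+2) => j ≠ 0),
          tmax E σ (n+1) parent dir g j
        = (∏ i ∈ Finset.univ.filter (fun i : Fin (n+1) => i ≠ 0),
            tmax E σ n parent' dir' g' i) * tmax E σ (n+1) parent dir g lst := by
      rw [prod_split]
      congr 1
      apply prod_congr rfl
      intro i hi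
      have hi0 : i ≠ 0 := by simpa using hi
      have e1 : g (parent i.castSucc) = g' (parent' i) := by
        rw [hg'def]; simp only; rw [hcast i hi0]
      have e2 : dir i.castSucc = dir' i := rfl
      have e3 : g i.castSucc = g' i := rfl
      rw [tmax, tmax, e1]
    have hg0 : g 0 = g' 0 := by rw [hg'def]; simp only; congr 1
    constructor
    · rw [hsum, hprodmin, hg0]
      calc (Finset.univ.filter (fun v => σ v = g' 0)).card *
            ((∏ i ∈ Finset.univ.filter (fun i : Fin (n+1) => i ≠ 0),
              tmin E σ n parent' dir' g' i) * tmin E σ (n+1) parent dir g lst)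
          = ((Finset.univ.filter (fun v => σ v = g' 0)).card *
            ∏ i ∈ Finset.univ.filter (fun i : Fin (n+1) => i ≠ 0),
              tmin E σ n parent' dir' g' i) * tmin E σ (n+1) parent dir g lst := by ring
        _ ≤ (tcSet E σ n parent' dir' g').card * tmin E σ (n+1) parent dir g lst :=
            Nat.mul_le_mul_right _ hIH.1
        _ ≤ ∑ f' ∈ tcSet E σ n parent' dir' g', myDeg E σ (dir lst) (f' p') (g lst) := by
            rw [← smul_eq_mul]
            exact Finset.card_nsmul_le_sum _ _ _ (fun f' hf' => (hdegbound f' hf').1)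
    · rw [hsum, hprodmax, hg0]
      calc ∑ f' ∈ tcSet E σ n parent' dir' g', myDeg E σ (dir lst) (f' p') (g lst)
          ≤ (tcSet E σ n parent' dir' g').card * tmax E σ (n+1) parent dir g lst := by
            rw [← smul_eq_mul]
            exact Finset.sum_le_card_nsmul _ _ _ (fun f' hf' => (hdegbound f' hf').2)
        _ ≤ ((Finset.univ.filter (fun v => σ v = g' 0)).card *
            ∏ i ∈ Finset.univ.filter (fun i : Fin (n+1) => i ≠ 0),
              tmax E σ n parent' dir' g' i) * tmax E σ (n+1) parent dir g lst :=
            Nat.mul_le_mul_right _ hIH.2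
        _ = (Finset.univ.filter (fun v => σ v = g' 0)).card *
            ((∏ i ∈ Finset.univ.filter (fun i : Fin (n+1) => i ≠ 0),
              tmax E σ n parent' dir' g' i) * tmax E σ (n+1) parent dir g lst) := by ring


lemma card_filter_out (E : Finset (V × V)) (σ : V → C) (c₁ c₂ : C) :
    (E.filter (fun p => σ p.1 = c₁ ∧ σ p.2 = c₂)).card
      = ∑ v ∈ Finset.univ.filter (fun v => σ v = c₁),
          (Finset.univ.filter (fun u => (v, u) ∈ E ∧ σ u = c₂)).card := by
  have hmaps : ∀ p ∈ E.filter (fun p => σ p.1 = c₁ ∧ σ p.2 = c₂),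
      p.1 ∈ Finset.univ.filter (fun v => σ v = c₁) := by
    intro p hp
    simp only [Finset.mem_filter, Finset.mem_univ, true_and] at hp ⊢
    exact hp.2.1
  rw [Finset.card_eq_sum_card_fiberwise hmaps]
  apply Finset.sum_congr rfl
  intro v hv
  apply Finset.card_nbij' (fun p => p.2) (fun u => (v, u))
  · intro p hp
    simp only [Finset.mem_coe, Finset.mem_filter, Finset.mem_univ, true_and] at hp ⊢
    obtain ⟨⟨hpE, _, h2⟩, h1⟩ := hp
    refine ⟨?_, h2⟩
    rw [← h1]
    simpa using hpE
  · intro u hu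
    simp only [Finset.mem_coe, Finset.mem_filter, Finset.mem_univ, true_and] at hu ⊢
    simp only [Finset.mem_coe, Finset.mem_filter, Finset.mem_univ, true_and] at hv
    exact ⟨⟨hu.1, hv, hu.2⟩, trivial⟩
  · intro p hp
    simp only [Finset.mem_coe, Finset.mem_filter] at hp
    rw [← hp.2]
  · intro u _
    rfl

lemma card_filter_in (E : Finset (V × V)) (σ : V → C) (c₁ c₂ : C) :
    (E.filter (fun p => σ p.1 = c₂ ∧ σ p.2 = c₁)).card
      = ∑ v ∈ Finset.univ.filter (fun v => σ v = c₁),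
          (Finset.univ.filter (fun u => (u, v) ∈ E ∧ σ u = c₂)).card := by
  have hmaps : ∀ p ∈ E.filter (fun p => σ p.1 = c₂ ∧ σ p.2 = c₁),
      p.2 ∈ Finset.univ.filter (fun v => σ v = c₁) := by
    intro p hp
    simp only [Finset.mem_filter, Finset.mem_univ, true_and] at hp ⊢
    exact hp.2.2
  rw [Finset.card_eq_sum_card_fiberwise hmaps]
  apply Finset.sum_congr rfl
  intro v hv
  apply Finset.card_nbij' (fun p => p.1) (fun u => (u, v))
  · intro p hp
    simp only [Finset.mem_coe, Finset.mem_filter, Finset.mem_univ, true_and] at hp ⊢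
    obtain ⟨⟨hpE, h2, _⟩, h1⟩ := hp
    refine ⟨?_, h2⟩
    rw [← h1]
    simpa using hpE
  · intro u hu
    simp only [Finset.mem_coe, Finset.mem_filter, Finset.mem_univ, true_and] at hu ⊢
    simp only [Finset.mem_coe, Finset.mem_filter, Finset.mem_univ, true_and] at hv
    exact ⟨⟨hu.1, hu.2, hv⟩, trivial⟩
  · intro p hp
    simp only [Finset.mem_coe, Finset.mem_filter] at hp
    rw [← hp.2]
  · intro u _
    rfl


lemma avg_bounds (S : Finset V) (h : S.Nonempty) (d : V → ℕ) :
    ((S.inf' h d : ℕ) : ℚ) ≤ ((∑ v ∈ S, d v : ℕ) : ℚ) / (S.card : ℚ)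
    ∧ ((∑ v ∈ S, d v : ℕ) : ℚ) / (S.card : ℚ) ≤ ((S.sup' h d : ℕ) : ℚ) := by
  have hpos : (0:ℚ) < S.card := by exact_mod_cast Finset.card_pos.mpr h
  constructor
  · rw [le_div_iff₀ hpos, Nat.cast_sum]
    calc ((S.inf' h d : ℕ) : ℚ) * S.card = ∑ _v ∈ S, ((S.inf' h d : ℕ) : ℚ) := by
          rw [Finset.sum_const, nsmul_eq_mul]; ring
      _ ≤ ∑ v ∈ S, (d v : ℚ) :=
          Finset.sum_le_sum (fun v hv => by exact_mod_cast Finset.inf'_le d hv)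
  · rw [div_le_iff₀ hpos, Nat.cast_sum]
    calc ∑ v ∈ S, (d v : ℚ) ≤ ∑ _v ∈ S, ((S.sup' h d : ℕ) : ℚ) :=
          Finset.sum_le_sum (fun v hv => by exact_mod_cast Finset.le_sup' d hv)
      _ = ((S.sup' h d : ℕ) : ℚ) * S.card := by rw [Finset.sum_const, nsmul_eq_mul]; ring

end Aux

/-- Error bound for the lifted estimator with average-degree statistics: if for every pair
of colors with at least one connecting edge (in either direction) the max degree statistic
is within a factor ε of the min degree statistic, then for an acyclic query with n+1
vertices the lifted estimate is within a factor ε^n of the true count. -/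
theorem stmt3 {V C : Type*} [Fintype V] [DecidableEq V] [Fintype C] [DecidableEq C]
    (E : Finset (V × V)) (σ : V → C) (n : ℕ)
    (parent : Fin (n + 1) → Fin (n + 1)) (dir : Fin (n + 1) → Bool)
    (hpar : ∀ j : Fin (n + 1), j ≠ 0 → parent j < j)
    (ε : ℚ) (hε1 : 1 ≤ ε) :
    let Vc : C → Finset V := fun c => Finset.univ.filter (fun v => σ v = c)
    let degOut : V → C → ℕ := fun v c =>
      (Finset.univ.filter (fun u => (v, u) ∈ E ∧ σ u = c)).card
    let degIn : V → C → ℕ := fun v c =>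
      (Finset.univ.filter (fun u => (u, v) ∈ E ∧ σ u = c)).card
    let τminOut : C → C → ℕ := fun c₁ c₂ =>
      if h : (Vc c₁).Nonempty then (Vc c₁).inf' h (fun v => degOut v c₂) else 0
    let τmaxOut : C → C → ℕ := fun c₁ c₂ =>
      if h : (Vc c₁).Nonempty then (Vc c₁).sup' h (fun v => degOut v c₂) else 0
    let τminIn : C → C → ℕ := fun c₁ c₂ =>
      if h : (Vc c₁).Nonempty then (Vc c₁).inf' h (fun v => degIn v c₂) else 0
    let τmaxIn : C → C → ℕ := fun c₁ c₂ =>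
      if h : (Vc c₁).Nonempty then (Vc c₁).sup' h (fun v => degIn v c₂) else 0
    let τavgOut : C → C → ℚ := fun c₁ c₂ =>
      ((E.filter (fun p => σ p.1 = c₁ ∧ σ p.2 = c₂)).card : ℚ) / ((Vc c₁).card : ℚ)
    let τavgIn : C → C → ℚ := fun c₁ c₂ =>
      ((E.filter (fun p => σ p.1 = c₂ ∧ σ p.2 = c₁)).card : ℚ) / ((Vc c₁).card : ℚ)
    let EQ : Finset (Fin (n + 1) × Fin (n + 1)) :=
      (Finset.univ.filter (fun j : Fin (n + 1) => j ≠ 0)).image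
        (fun j => if dir j then (parent j, j) else (j, parent j))
    let homQG : Finset (Fin (n + 1) → V) :=
      Finset.univ.filter (fun f => ∀ e ∈ EQ, (f e.1, f e.2) ∈ E)
    let homQF : Finset (Fin (n + 1) → C) :=
      Finset.univ.filter (fun g => ∀ e ∈ EQ, ∃ p ∈ E, σ p.1 = g e.1 ∧ σ p.2 = g e.2)
    let ψ : C → ℕ := fun c => (Vc c).card
    let Φ : ℚ := ∑ g ∈ homQF, (ψ (g 0) : ℚ) *
      ∏ j ∈ Finset.univ.filter (fun j : Fin (n + 1) => j ≠ 0),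
        (if dir j then τavgOut (g (parent j)) (g j) else τavgIn (g (parent j)) (g j))
    (∀ c₁ c₂ : C, (E.filter (fun p => σ p.1 = c₁ ∧ σ p.2 = c₂)).Nonempty →
      0 < τminOut c₁ c₂ ∧ (τmaxOut c₁ c₂ : ℚ) ≤ ε * (τminOut c₁ c₂ : ℚ)) →
    (∀ c₁ c₂ : C, (E.filter (fun p => σ p.1 = c₂ ∧ σ p.2 = c₁)).Nonempty →
      0 < τminIn c₁ c₂ ∧ (τmaxIn c₁ c₂ : ℚ) ≤ ε * (τminIn c₁ c₂ : ℚ)) →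
    0 < homQG.card →
    max (Φ / (homQG.card : ℚ)) ((homQG.card : ℚ) / Φ) ≤ ε ^ n := by
  intro Vc degOut degIn τminOut τmaxOut τminIn τmaxIn τavgOut τavgIn EQ homQG homQF ψ Φ
  intro hOut hIn hpos
  simp only [τminOut, τmaxOut, τminIn, τmaxIn, Vc, degOut, degIn] at hOut hIn
  have hεn : (0:ℚ) < ε ^ n := pow_pos (lt_of_lt_of_le one_pos hε1) n
  have hεnn : (0:ℚ) ≤ ε ^ n := le_of_lt hεn
  have hfiltcard : (Finset.univ.filter (fun j : Fin (n+1) => j ≠ 0)).card = n := by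
    rw [Finset.filter_ne', Finset.card_erase_of_mem (Finset.mem_univ _), Finset.card_univ,
      Fintype.card_fin]
    omega
  have hEQmem : ∀ (P : Fin (n+1) × Fin (n+1) → Prop),
      (∀ e ∈ EQ, P e) ↔
        (∀ j : Fin (n+1), j ≠ 0 → P (if dir j then (parent j, j) else (j, parent j))) := by
    intro P
    simp only [EQ, Finset.forall_mem_image, Finset.mem_filter, Finset.mem_univ, true_and]
  have hhomQG : ∀ f : Fin (n+1) → V, f ∈ homQG ↔
      (∀ j : Fin (n+1), j ≠ 0 →
        (if dir j then (f (parent j), f j) ∈ E else (f j, f (parent j)) ∈ E)) := by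
    intro f
    simp only [homQG, Finset.mem_filter, Finset.mem_univ, true_and]
    rw [hEQmem]
    apply forall_congr'
    intro j
    apply imp_congr_right
    intro hj
    by_cases hd : dir j <;> simp [hd]
  have hhomQF : ∀ g : Fin (n+1) → C, g ∈ homQF ↔
      (∀ j : Fin (n+1), j ≠ 0 →
        (if dir j then (E.filter (fun p => σ p.1 = g (parent j) ∧ σ p.2 = g j)).Nonempty
         else (E.filter (fun p => σ p.1 = g j ∧ σ p.2 = g (parent j))).Nonempty)) := by
    intro g
    simp only [homQF, Finset.mem_filter, Finset.mem_univ, true_and]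
    rw [hEQmem]
    apply forall_congr'
    intro j
    apply imp_congr_right
    intro hj
    by_cases hd : dir j <;> simp [hd, Finset.filter_nonempty_iff]
  have hmaps2 : ∀ f ∈ homQG, σ ∘ f ∈ homQF := by
    intro f hf
    rw [hhomQG] at hf
    rw [hhomQF]
    intro j hj
    have h1 := hf j hj
    by_cases hd : dir j
    · rw [if_pos hd] at h1 ⊢
      exact ⟨(f (parent j), f j), Finset.mem_filter.mpr ⟨h1, rfl, rfl⟩⟩
    · rw [if_neg hd] at h1 ⊢
      exact ⟨(f j, f (parent j)), Finset.mem_filter.mpr ⟨h1, rfl, rfl⟩⟩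
  have hA : homQG.card = ∑ g ∈ homQF, (tcSet E σ n parent dir g).card := by
    rw [Finset.card_eq_sum_card_fiberwise hmaps2]
    apply Finset.sum_congr rfl
    intro g hg
    congr 1
    ext f
    rw [Finset.mem_filter]
    rw [hhomQG f]
    simp only [tcSet, Finset.mem_filter, Finset.mem_univ, true_and, funext_iff,
      Function.comp_apply]
  have hVcne : ∀ g ∈ homQF, ∀ j : Fin (n+1), j ≠ 0 →
      (Finset.univ.filter (fun v => σ v = g (parent j))).Nonempty := by
    intro g hg j hj
    have h1 := (hhomQF g).1 hg j hj
    by_cases hd : dir j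
    · rw [if_pos hd] at h1
      obtain ⟨p, hp⟩ := h1
      rw [Finset.mem_filter] at hp
      exact ⟨p.1, Finset.mem_filter.mpr ⟨Finset.mem_univ _, hp.2.1⟩⟩
    · rw [if_neg hd] at h1
      obtain ⟨p, hp⟩ := h1
      rw [Finset.mem_filter] at hp
      exact ⟨p.2, Finset.mem_filter.mpr ⟨Finset.mem_univ _, hp.2.2⟩⟩
  have hfac : ∀ g ∈ homQF, ∀ j ∈ Finset.univ.filter (fun j : Fin (n+1) => j ≠ 0),
      ((tmax E σ n parent dir g j : ℚ) ≤ ε * (tmin E σ n parent dir g j : ℚ))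
      ∧ ((tmin E σ n parent dir g j : ℚ) ≤
          (if dir j then τavgOut (g (parent j)) (g j) else τavgIn (g (parent j)) (g j)))
      ∧ ((if dir j then τavgOut (g (parent j)) (g j) else τavgIn (g (parent j)) (g j))
          ≤ (tmax E σ n parent dir g j : ℚ)) := by
    intro g hg j hjf
    have hj : j ≠ 0 := (Finset.mem_filter.mp hjf).2
    have hne := (hhomQF g).1 hg j hj
    have hVc := hVcne g hg j hj
    by_cases hd : dir j
    · rw [if_pos hd] at hne
      have h1 := hOut (g (parent j)) (g j) hne
      rw [dif_pos hVc, dif_pos hVc] at h1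
      have etmin : tmin E σ n parent dir g j
          = (Finset.univ.filter (fun v => σ v = g (parent j))).inf' hVc
              (fun v => (Finset.univ.filter (fun u => (v, u) ∈ E ∧ σ u = g j)).card) := by
        rw [tmin, dif_pos hVc]
        congr 1
        funext v
        simp [myDeg, hd]
      have etmax : tmax E σ n parent dir g j
          = (Finset.univ.filter (fun v => σ v = g (parent j))).sup' hVc
              (fun v => (Finset.univ.filter (fun u => (v, u) ∈ E ∧ σ u = g j)).card) := by
        rw [tmax, dif_pos hVc]
        congr 1
        funext v
        simp [myDeg, hd]
      have eavg : (if dir j then τavgOut (g (parent j)) (g j)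
            else τavgIn (g (parent j)) (g j))
          = ((∑ v ∈ Finset.univ.filter (fun v => σ v = g (parent j)),
              (Finset.univ.filter (fun u => (v, u) ∈ E ∧ σ u = g j)).card : ℕ) : ℚ)
            / (((Finset.univ.filter (fun v => σ v = g (parent j))).card : ℕ) : ℚ) := by
        rw [if_pos hd]
        simp only [τavgOut, Vc]
        rw [card_filter_out E σ (g (parent j)) (g j)]
      have hb := avg_bounds (Finset.univ.filter (fun v => σ v = g (parent j))) hVc
        (fun v => (Finset.univ.filter (fun u => (v, u) ∈ E ∧ σ u = g j)).card)
      refine ⟨?_, ?_, ?_⟩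
      · rw [etmin, etmax]; exact h1.2
      · rw [etmin, eavg]; exact hb.1
      · rw [eavg, etmax]; exact hb.2
    · rw [if_neg hd] at hne
      have h1 := hIn (g (parent j)) (g j) hne
      rw [dif_pos hVc, dif_pos hVc] at h1
      have etmin : tmin E σ n parent dir g j
          = (Finset.univ.filter (fun v => σ v = g (parent j))).inf' hVc
              (fun v => (Finset.univ.filter (fun u => (u, v) ∈ E ∧ σ u = g j)).card) := by
        rw [tmin, dif_pos hVc]
        congr 1
        funext v
        simp [myDeg, hd]
      have etmax : tmax E σ n parent dir g j
          = (Finset.univ.filter (fun v => σ v = g (parent j))).sup' hVc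
              (fun v => (Finset.univ.filter (fun u => (u, v) ∈ E ∧ σ u = g j)).card) := by
        rw [tmax, dif_pos hVc]
        congr 1
        funext v
        simp [myDeg, hd]
      have eavg : (if dir j then τavgOut (g (parent j)) (g j)
            else τavgIn (g (parent j)) (g j))
          = ((∑ v ∈ Finset.univ.filter (fun v => σ v = g (parent j)),
              (Finset.univ.filter (fun u => (u, v) ∈ E ∧ σ u = g j)).card : ℕ) : ℚ)
            / (((Finset.univ.filter (fun v => σ v = g (parent j))).card : ℕ) : ℚ) := by
        rw [if_neg hd]
        simp only [τavgIn, Vc]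
        rw [card_filter_in E σ (g (parent j)) (g j)]
      have hb := avg_bounds (Finset.univ.filter (fun v => σ v = g (parent j))) hVc
        (fun v => (Finset.univ.filter (fun u => (u, v) ∈ E ∧ σ u = g j)).card)
      refine ⟨?_, ?_, ?_⟩
      · rw [etmin, etmax]; exact h1.2
      · rw [etmin, eavg]; exact hb.1
      · rw [eavg, etmax]; exact hb.2
  have hkey : ∀ g ∈ homQF,
      ((tcSet E σ n parent dir g).card : ℚ) ≤
          ε ^ n * ((ψ (g 0) : ℚ) *
            ∏ j ∈ Finset.univ.filter (fun j : Fin (n+1) => j ≠ 0),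
              (if dir j then τavgOut (g (parent j)) (g j) else τavgIn (g (parent j)) (g j)))
        ∧ (ψ (g 0) : ℚ) *
            ∏ j ∈ Finset.univ.filter (fun j : Fin (n+1) => j ≠ 0),
              (if dir j then τavgOut (g (parent j)) (g j) else τavgIn (g (parent j)) (g j))
          ≤ ε ^ n * ((tcSet E σ n parent dir g).card : ℚ) := by
    intro g hg
    have htc := tree_count E σ n parent dir hpar g
    have hc1 : (ψ (g 0) : ℚ) *
        ∏ j ∈ Finset.univ.filter (fun j : Fin (n+1) => j ≠ 0),
          (tmin E σ n parent dir g j : ℚ)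
        ≤ ((tcSet E σ n parent dir g).card : ℚ) := by
      simp only [ψ, Vc]
      exact_mod_cast htc.1
    have hc2 : ((tcSet E σ n parent dir g).card : ℚ) ≤ (ψ (g 0) : ℚ) *
        ∏ j ∈ Finset.univ.filter (fun j : Fin (n+1) => j ≠ 0),
          (tmax E σ n parent dir g j : ℚ) := by
      simp only [ψ, Vc]
      exact_mod_cast htc.2
    have hPmPa : ∏ j ∈ Finset.univ.filter (fun j : Fin (n+1) => j ≠ 0),
          (tmin E σ n parent dir g j : ℚ)
        ≤ ∏ j ∈ Finset.univ.filter (fun j : Fin (n+1) => j ≠ 0),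
          (if dir j then τavgOut (g (parent j)) (g j) else τavgIn (g (parent j)) (g j)) :=
      Finset.prod_le_prod (fun j _ => Nat.cast_nonneg _) (fun j hj => (hfac g hg j hj).2.1)
    have hPaPM : ∏ j ∈ Finset.univ.filter (fun j : Fin (n+1) => j ≠ 0),
          (if dir j then τavgOut (g (parent j)) (g j) else τavgIn (g (parent j)) (g j))
        ≤ ∏ j ∈ Finset.univ.filter (fun j : Fin (n+1) => j ≠ 0),
          (tmax E σ n parent dir g j : ℚ) :=
      Finset.prod_le_prod
        (fun j hj => le_trans (Nat.cast_nonneg _) (hfac g hg j hj).2.1)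
        (fun j hj => (hfac g hg j hj).2.2)
    have hPM : ∏ j ∈ Finset.univ.filter (fun j : Fin (n+1) => j ≠ 0),
          (tmax E σ n parent dir g j : ℚ)
        ≤ ε ^ n * ∏ j ∈ Finset.univ.filter (fun j : Fin (n+1) => j ≠ 0),
          (tmin E σ n parent dir g j : ℚ) := by
      calc ∏ j ∈ Finset.univ.filter (fun j : Fin (n+1) => j ≠ 0),
            (tmax E σ n parent dir g j : ℚ)
          ≤ ∏ j ∈ Finset.univ.filter (fun j : Fin (n+1) => j ≠ 0),
            (ε * (tmin E σ n parent dir g j : ℚ)) :=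
          Finset.prod_le_prod (fun j _ => Nat.cast_nonneg _) (fun j hj => (hfac g hg j hj).1)
        _ = ε ^ n * ∏ j ∈ Finset.univ.filter (fun j : Fin (n+1) => j ≠ 0),
            (tmin E σ n parent dir g j : ℚ) := by
          rw [Finset.prod_mul_distrib, Finset.prod_const, hfiltcard]
    have hψ0 : (0:ℚ) ≤ (ψ (g 0) : ℚ) := Nat.cast_nonneg _
    constructor
    · calc ((tcSet E σ n parent dir g).card : ℚ)
          ≤ (ψ (g 0) : ℚ) * ∏ j ∈ Finset.univ.filter (fun j : Fin (n+1) => j ≠ 0),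
              (tmax E σ n parent dir g j : ℚ) := hc2
        _ ≤ (ψ (g 0) : ℚ) * (ε ^ n * ∏ j ∈ Finset.univ.filter (fun j : Fin (n+1) => j ≠ 0),
              (tmin E σ n parent dir g j : ℚ)) := mul_le_mul_of_nonneg_left hPM hψ0
        _ = ε ^ n * ((ψ (g 0) : ℚ) * ∏ j ∈ Finset.univ.filter (fun j : Fin (n+1) => j ≠ 0),
              (tmin E σ n parent dir g j : ℚ)) := by ring
        _ ≤ ε ^ n * ((ψ (g 0) : ℚ) * ∏ j ∈ Finset.univ.filter (fun j : Fin (n+1) => j ≠ 0),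
              (if dir j then τavgOut (g (parent j)) (g j) else τavgIn (g (parent j)) (g j))) :=
          mul_le_mul_of_nonneg_left (mul_le_mul_of_nonneg_left hPmPa hψ0) hεnn
    · calc (ψ (g 0) : ℚ) * ∏ j ∈ Finset.univ.filter (fun j : Fin (n+1) => j ≠ 0),
            (if dir j then τavgOut (g (parent j)) (g j) else τavgIn (g (parent j)) (g j))
          ≤ (ψ (g 0) : ℚ) * ∏ j ∈ Finset.univ.filter (fun j : Fin (n+1) => j ≠ 0),
              (tmax E σ n parent dir g j : ℚ) := mul_le_mul_of_nonneg_left hPaPM hψ0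
        _ ≤ (ψ (g 0) : ℚ) * (ε ^ n * ∏ j ∈ Finset.univ.filter (fun j : Fin (n+1) => j ≠ 0),
              (tmin E σ n parent dir g j : ℚ)) := mul_le_mul_of_nonneg_left hPM hψ0
        _ = ε ^ n * ((ψ (g 0) : ℚ) * ∏ j ∈ Finset.univ.filter (fun j : Fin (n+1) => j ≠ 0),
              (tmin E σ n parent dir g j : ℚ)) := by ring
        _ ≤ ε ^ n * ((tcSet E σ n parent dir g).card : ℚ) :=
          mul_le_mul_of_nonneg_left hc1 hεnn
  have hArat : (homQG.card : ℚ)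
      = ∑ g ∈ homQF, ((tcSet E σ n parent dir g).card : ℚ) := by
    rw [hA]
    push_cast
    rfl
  have h1 : Φ ≤ ε ^ n * (homQG.card : ℚ) := by
    rw [hArat, Finset.mul_sum]
    simp only [Φ]
    exact Finset.sum_le_sum (fun g hg => (hkey g hg).2)
  have h2 : (homQG.card : ℚ) ≤ ε ^ n * Φ := by
    rw [hArat]
    simp only [Φ]
    rw [Finset.mul_sum]
    exact Finset.sum_le_sum (fun g hg => (hkey g hg).1)
  have hcpos : (0:ℚ) < homQG.card := by exact_mod_cast hpos
  have hΦpos : 0 < Φ := by nlinarith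
  rw [max_le_iff]
  constructor
  · rw [div_le_iff₀ hcpos]
    exact h1
  · rw [div_le_iff₀ hΦpos]
    exact h2
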